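/- Let p be prime, m a positive integer. The number of partitions of Z/p^m Z that are fixed by all translations is congruent to B_{p^m} modulo p. -/

import Mathlib

/-- Stirling numbers of the second kind. -/
def stirling : ℕ → ℕ → ℕ
  | 0, 0 => 1
  | 0, _ + 1 => 0
  | _ + 1, 0 => 0
  | n + 1, k + 1 => stirling n k + (k + 1) * stirling n (k + 1)

/-- The `n`-th Bell number. -/
def bell (n : ℕ) : ℕ := ∑ k ∈ Finset.range (n + 1), stirling n k

open Finset

lemma stirling_succ_succ (n k : ℕ) :
    stirling (n+1) (k+1) = stirling n k + (k+1) * stirling n (k+1) := rfl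

lemma stirling_succ_zero (n : ℕ) : stirling (n+1) 0 = 0 := rfl

lemma stirling_of_lt : ∀ {n k : ℕ}, n < k → stirling n k = 0 := by
  intro n
  induction n with
  | zero => intro k hk; match k, hk with | k+1, _ => rfl
  | succ n ih =>
      intro k hk
      match k, hk with
      | k+1, hk =>
        rw [stirling_succ_succ, ih (by omega), ih (by omega)]; ring

lemma stirling_self : ∀ n, stirling n n = 1 := by
  intro n
  induction n with
  | zero => rfl
  | succ n ih => rw [stirling_succ_succ, ih, stirling_of_lt (by omega)]; ring

lemma stirling_one_right : ∀ n, stirling (n+1) 1 = 1 := by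
  intro n
  induction n with
  | zero => rfl
  | succ n ih => rw [show (1:ℕ) = 0 + 1 from rfl, stirling_succ_succ, stirling_succ_zero, ih]

/-- alternating sum `∑ (-1)^(k+j) C(k,j) j^n`. -/
def sterA (n k : ℕ) : ℤ := ∑ j ∈ range (k+1), (-1:ℤ)^(k+j) * (k.choose j) * (j:ℤ)^n

lemma sterA_add (n k : ℕ) :
    sterA n k + sterA n (k+1)
      = ∑ i ∈ range (k+1), (-1:ℤ)^(k+i) * (k.choose i) * ((i:ℤ)+1)^n := by
  have pascal : ∀ i, ((k.choose i : ℤ)) = ((k+1).choose (i+1) : ℤ) - (k.choose (i+1) : ℤ) := by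
    intro i
    have := Nat.choose_succ_succ (k) (i)
    push_cast [this]
    ring
  have hsplit : ∑ i ∈ range (k+1), (-1:ℤ)^(k+i) * (k.choose i) * ((i:ℤ)+1)^n
      = (∑ i ∈ range (k+1), (-1:ℤ)^(k+i) * ((k+1).choose (i+1)) * ((i:ℤ)+1)^n)
        - ∑ i ∈ range (k+1), (-1:ℤ)^(k+i) * (k.choose (i+1)) * ((i:ℤ)+1)^n := by
    rw [← Finset.sum_sub_distrib]
    refine Finset.sum_congr rfl fun i _ => ?_
    rw [pascal i]; ring
  rw [hsplit]
  have h1 : sterA n (k+1)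
      = (∑ i ∈ range (k+1), (-1:ℤ)^(k+i) * ((k+1).choose (i+1)) * ((i:ℤ)+1)^n)
        + (-1:ℤ)^(k+1) * (0:ℤ)^n := by
    rw [sterA, Finset.sum_range_succ']
    congr 1
    · refine Finset.sum_congr rfl fun i _ => ?_
      have hs : (-1:ℤ)^(k+1+(i+1)) = (-1:ℤ)^(k+i) := by
        rw [show k+1+(i+1) = (k+i)+2 by ring, pow_add]; ring
      rw [hs]
      push_cast
      ring
    · simp
  rw [h1]
  have h2 : sterA n k
      = (∑ i ∈ range k, (-1:ℤ)^(k+i) * (k.choose (i+1)) * ((i:ℤ)+1)^n) * (-1)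
        + (-1:ℤ)^(k) * (0:ℤ)^n := by
    rw [sterA, Finset.sum_range_succ', Finset.sum_mul]
    congr 1
    · refine Finset.sum_congr rfl fun i _ => ?_
      have hs : (-1:ℤ)^(k+(i+1)) = (-1:ℤ)^(k+i) * (-1) := by
        rw [show k+(i+1) = (k+i)+1 by ring, pow_add]; ring
      rw [hs]
      push_cast
      ring
    · simp
  have h3 : ∑ i ∈ range (k+1), (-1:ℤ)^(k+i) * (k.choose (i+1)) * ((i:ℤ)+1)^n
      = ∑ i ∈ range k, (-1:ℤ)^(k+i) * (k.choose (i+1)) * ((i:ℤ)+1)^n := by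
    rw [Finset.sum_range_succ, Nat.choose_succ_self]
    simp
  rw [h2, h3]
  ring


lemma sterA_succ (n k : ℕ) :
    sterA (n+1) (k+1) = ((k:ℤ)+1) * (sterA n k + sterA n (k+1)) := by
  rw [sterA_add, Finset.mul_sum, sterA, Finset.sum_range_succ']
  have h0 : (-1:ℤ)^(k+1+0) * ((k+1).choose 0) * ((0:ℕ):ℤ)^(n+1) = 0 := by simp
  rw [h0, add_zero]
  refine Finset.sum_congr rfl fun i _ => ?_
  have hs : (-1:ℤ)^(k+1+(i+1)) = (-1:ℤ)^(k+i) := by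
    rw [show k+1+(i+1) = (k+i)+2 by ring, pow_add]; ring
  have hch : ((i:ℤ)+1) * ((k+1).choose (i+1)) = ((k:ℤ)+1) * (k.choose i) := by
    have := Nat.add_one_mul_choose_eq k i
    have h2 : ((k+1) * k.choose i : ℤ) = (((k+1).choose (i+1) * (i+1) : ℕ) : ℤ) := by
      exact_mod_cast congrArg (Nat.cast : ℕ → ℤ) this
    push_cast at h2 ⊢
    linarith [h2]
  rw [hs]
  push_cast
  rw [pow_succ]
  linear_combination ((-1:ℤ)^(k+i) * ((i:ℤ)+1)^n) * hch

lemma factorial_stirling : ∀ n k, (k.factorial : ℤ) * stirling n k = sterA n k := by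
  intro n
  induction n with
  | zero =>
      intro k
      match k with
      | 0 => simp [stirling, sterA]
      | k+1 =>
        rw [stirling_of_lt (by omega)]
        have : sterA 0 (k+1) = (-1:ℤ)^(k+1) * ∑ j ∈ range (k+2), (-1:ℤ)^j * ((k+1).choose j) := by
          rw [sterA, Finset.mul_sum]
          refine Finset.sum_congr rfl fun j _ => ?_
          rw [pow_add]
          push_cast
          ring
        rw [this, Int.alternating_sum_range_choose]
        simp
  | succ n ih =>
      intro k
      match k with
      | 0 =>
        rw [stirling_succ_zero, sterA]
        simp
      | k+1 =>
        rw [stirling_succ_succ, sterA_succ, ← ih k, ← ih (k+1)]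
        push_cast [Nat.factorial_succ]
        ring

lemma stirling_one (k : ℕ) (hk : 2 ≤ k) : stirling 1 k = 0 := by
  match k, hk with
  | k+2, _ =>
    rw [show k+2 = (k+1)+1 from rfl, stirling_succ_succ, stirling_of_lt (by omega),
      stirling_of_lt (by omega)]
    ring

lemma stirling_prime {p : ℕ} (hp : p.Prime) {k : ℕ} (hk2 : 2 ≤ k) (hkp : k < p) :
    (stirling p k : ZMod p) = 0 := by
  haveI : Fact p.Prime := ⟨hp⟩
  have h1 : ((k.factorial : ℤ) : ZMod p) * (stirling p k : ZMod p) = ((sterA p k : ℤ) : ZMod p) := by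
    rw [← factorial_stirling p k]; push_cast; ring
  have h2 : ((sterA p k : ℤ) : ZMod p) = ((sterA 1 k : ℤ) : ZMod p) := by
    rw [sterA, sterA]
    push_cast
    refine Finset.sum_congr rfl fun j _ => ?_
    rw [ZMod.pow_card, pow_one]
  have h3 : ((sterA 1 k : ℤ) : ZMod p) = 0 := by
    rw [← factorial_stirling 1 k, stirling_one k hk2]
    push_cast
    ring
  rw [h2, h3] at h1
  have hfac : ((k.factorial : ℤ) : ZMod p) ≠ 0 := by
    push_cast
    rw [Ne, ZMod.natCast_eq_zero_iff]
    intro hdvd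
    exact absurd (hp.dvd_factorial.mp hdvd) (by omega)
  exact (mul_eq_zero.mp h1).resolve_left hfac

/-- auxiliary shifted-Stirling term. -/
noncomputable def dcorr (p n k : ℕ) : ZMod p :=
  if p ≤ k then (stirling n (k-p) : ZMod p) else 0

lemma stirling_add_prime {p : ℕ} (hp : p.Prime) :
    ∀ n k, (stirling (n+p) k : ZMod p) = (stirling (n+1) k : ZMod p) + dcorr p n k := by
  have hp2 := hp.two_le
  intro n
  induction n with
  | zero =>
      intro k
      rcases lt_trichotomy k p with hkp | rfl | hkp
      · rw [dcorr, if_neg (by omega), add_zero, zero_add]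
        match k with
        | 0 =>
          obtain ⟨q, rfl⟩ : ∃ q, p = q + 1 := ⟨p - 1, by omega⟩
          rw [stirling_succ_zero, stirling_succ_zero]
        | 1 =>
          obtain ⟨q, rfl⟩ : ∃ q, p = q + 1 := ⟨p - 1, by omega⟩
          rw [stirling_one_right, show (0:ℕ)+1 = 1 from rfl, stirling_one_right]
        | k+2 =>
          rw [stirling_prime hp (by omega) hkp, stirling_one _ (by omega)]
          simp
      · rw [dcorr, if_pos le_rfl, Nat.sub_self, zero_add, stirling_self,
          stirling_of_lt (by omega)]
        simp [stirling]
      · rw [dcorr, if_pos (by omega), zero_add, stirling_of_lt (by omega),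
          stirling_of_lt (by omega), stirling_of_lt (by omega)]
        simp
  | succ n ih =>
      intro k
      match k with
      | 0 =>
        rw [dcorr, if_neg (by omega), show n+1+p = (n+p)+1 by omega, stirling_succ_zero,
          stirling_succ_zero]
        simp
      | k+1 =>
        have hrec : (stirling (n+1+p) (k+1) : ZMod p)
            = (stirling (n+p) k : ZMod p) + ((k:ZMod p)+1) * (stirling (n+p) (k+1) : ZMod p) := by
          rw [show n+1+p = (n+p)+1 by ring, stirling_succ_succ]
          push_cast
          ring
        rw [hrec, ih k, ih (k+1), stirling_succ_succ (n+1) k]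
        rcases lt_trichotomy (k+1) p with hkp | hkp | hkp
        · rw [dcorr, if_neg (by omega), dcorr, if_neg (by omega), dcorr, if_neg (by omega)]
          push_cast
          ring
        · rw [dcorr, if_neg (by omega), dcorr, if_pos (by omega), dcorr, if_pos (by omega)]
          have hz : ((k:ZMod p)+1) = 0 := by
            have h5 : (((k+1 : ℕ)) : ZMod p) = 0 := by rw [hkp, ZMod.natCast_self]
            push_cast at h5
            exact h5
          rw [show k+1-p = 0 by omega, stirling_succ_zero]
          push_cast
          linear_combination ((stirling n 0 : ZMod p)) * hz
        · have hkp' : p ≤ k := by omega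
          rw [dcorr, if_pos (by omega), dcorr, if_pos (by omega), dcorr, if_pos (by omega),
            show k+1-p = (k-p)+1 by omega, stirling_succ_succ n (k-p)]
          have hz : ((k:ZMod p)+1) = ((k-p : ℕ) : ZMod p) + 1 := by
            have h5 : ((k : ℕ) : ZMod p) = (((k-p) + p : ℕ) : ZMod p) := by
              rw [Nat.sub_add_cancel hkp']
            push_cast [ZMod.natCast_self] at h5
            rw [h5]; ring
          push_cast
          linear_combination ((stirling n (k-p+1) : ZMod p)) * hz

lemma bell_add_prime {p : ℕ} (hp : p.Prime) (n : ℕ) :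
    (bell (n+p) : ZMod p) = (bell (n+1) : ZMod p) + (bell n : ZMod p) := by
  have hp2 := hp.two_le
  have hcast : (bell (n+p) : ZMod p) = ∑ k ∈ range (n+p+1), (stirling (n+p) k : ZMod p) := by
    rw [bell]; push_cast; rfl
  rw [hcast]
  have hsum : ∑ k ∈ range (n+p+1), (stirling (n+p) k : ZMod p)
      = (∑ k ∈ range (n+p+1), (stirling (n+1) k : ZMod p))
        + ∑ k ∈ range (n+p+1), dcorr p n k := by
    rw [← Finset.sum_add_distrib]
    exact Finset.sum_congr rfl fun k _ => stirling_add_prime hp n k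
  rw [hsum]
  congr 1
  · have hsub : ∑ k ∈ range (n+p+1), (stirling (n+1) k : ZMod p)
        = ∑ k ∈ range (n+2), (stirling (n+1) k : ZMod p) := by
      refine (Finset.sum_subset (by intro x hx; simp at hx ⊢; omega) ?_).symm
      intro k _ hk
      simp only [Finset.mem_range, not_lt] at hk
      rw [stirling_of_lt (by omega)]
      simp
    rw [hsub, bell]
    push_cast
    rfl
  · have hre : range (n+p+1) = range (p + (n+1)) := by congr 1; omega
    rw [hre, Finset.sum_range_add]
    have h1 : ∑ k ∈ range p, dcorr p n k = 0 := by
      refine Finset.sum_eq_zero fun k hk => ?_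
      simp only [Finset.mem_range] at hk
      rw [dcorr, if_neg (by omega)]
    have h2 : ∀ i, dcorr p n (p + i) = (stirling n i : ZMod p) := by
      intro i
      rw [dcorr, if_pos (by omega), Nat.add_sub_cancel_left]
    rw [h1, zero_add]
    rw [Finset.sum_congr rfl fun i _ => h2 i, bell]
    push_cast
    rfl

lemma bell_iterate {p : ℕ} (q : ℕ) (c : ZMod p)
    (h : ∀ n, (bell (n+q) : ZMod p) = c * bell n + bell (n+1)) :
    ∀ j n, (bell (n + j*q) : ZMod p)
      = ∑ i ∈ range (j+1), (j.choose i : ZMod p) * c^(j-i) * bell (n+i) := by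
  intro j
  induction j with
  | zero => intro n; simp
  | succ j ih =>
      intro n
      have hL : (bell (n + (j+1)*q) : ZMod p) = c * bell (n + j*q) + bell ((n+1) + j*q) := by
        rw [show n + (j+1)*q = (n + j*q) + q by ring, h (n + j*q),
          show n + j*q + 1 = (n+1) + j*q by ring]
      rw [hL, ih n, ih (n+1)]
      rw [Finset.sum_range_succ' (fun i => ((j+1).choose i : ZMod p) * c^(j+1-i) * bell (n+i)) (j+1)]
      have htgt : ∀ i, (((j+1).choose (i+1) : ZMod p)) * c^(j+1-(i+1)) * bell (n+(i+1))
          = ((j.choose i : ZMod p) + (j.choose (i+1) : ZMod p)) * c^(j-i) * bell ((n+1)+i) := by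
        intro i
        rw [Nat.succ_sub_succ, Nat.choose_succ_succ]
        push_cast
        rw [show n+(i+1) = (n+1)+i by ring]
      rw [Finset.sum_congr rfl fun i _ => htgt i]
      simp only [Nat.choose_zero_right, Nat.cast_one, one_mul, Nat.sub_zero, Nat.add_zero]
      -- goal: c * Σ C(j,i)c^{j-i}b(n+i) + Σ C(j,i)c^{j-i}b(n+1+i)
      --     = Σ (C(j,i)+C(j,i+1)) c^{j-i} b(n+1+i) + c^{j+1} b n
      rw [Finset.mul_sum]
      have hsplit : ∑ i ∈ range (j+1),
            ((j.choose i : ZMod p) + (j.choose (i+1) : ZMod p)) * c^(j-i) * bell ((n+1)+i)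
          = (∑ i ∈ range (j+1), (j.choose i : ZMod p) * c^(j-i) * bell ((n+1)+i))
            + ∑ i ∈ range (j+1), (j.choose (i+1) : ZMod p) * c^(j-i) * bell ((n+1)+i) := by
        rw [← Finset.sum_add_distrib]
        exact Finset.sum_congr rfl fun i _ => by ring
      rw [hsplit]
      have hc : ∑ i ∈ range (j+1), c * ((j.choose i : ZMod p) * c^(j-i) * bell (n+i))
          = (∑ i ∈ range (j+1), (j.choose (i+1) : ZMod p) * c^(j-i) * bell ((n+1)+i))
            + c^(j+1) * bell n := by
        rw [Finset.sum_range_succ' (fun i => c * ((j.choose i : ZMod p) * c^(j-i) * bell (n+i))) j]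
        have htop : ∑ i ∈ range (j+1), (j.choose (i+1) : ZMod p) * c^(j-i) * bell ((n+1)+i)
            = ∑ i ∈ range j, (j.choose (i+1) : ZMod p) * c^(j-i) * bell ((n+1)+i) := by
          rw [Finset.sum_range_succ, Nat.choose_succ_self]
          simp
        rw [htop]
        congr 1
        · refine Finset.sum_congr rfl fun i hi => ?_
          simp only [Finset.mem_range] at hi
          rw [show (n+1)+i = n+(i+1) by ring, show j - i = (j - (i+1)) + 1 by omega, pow_succ]
          ring
        · rw [Nat.choose_zero_right, Nat.sub_zero, Nat.add_zero, pow_succ]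
          push_cast
          ring
      rw [hc]
      ring

lemma bell_pow_prime {p : ℕ} (hp : p.Prime) :
    ∀ (m n : ℕ), (bell (n + p^m) : ZMod p) = (m : ZMod p) * bell n + bell (n+1) := by
  haveI : Fact p.Prime := ⟨hp⟩
  have hp2 := hp.two_le
  intro m
  induction m with
  | zero => intro n; simp
  | succ m ih =>
      intro n
      have hiter := bell_iterate (p^m) (m : ZMod p) ih p n
      have hmain : (bell (n + p^(m+1)) : ZMod p) = (bell (n + p * p^m) : ZMod p) := by
        rw [pow_succ']
      rw [hmain, hiter, Finset.sum_range_succ]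
      have hmid : ∑ i ∈ range p, (p.choose i : ZMod p) * (m : ZMod p)^(p-i) * bell (n+i)
          = (m : ZMod p)^p * bell n := by
        obtain ⟨q, hq⟩ : ∃ q, p = q + 1 := ⟨p - 1, by omega⟩
        rw [show range p = range (q+1) by rw [hq], Finset.sum_range_succ' _ q]
        have hz : ∀ i ∈ range q, (p.choose (i+1) : ZMod p) * (m : ZMod p)^(p-(i+1)) * bell (n+(i+1)) = 0 := by
          intro i hi
          simp only [Finset.mem_range] at hi
          have hdvd : p ∣ p.choose (i+1) := hp.dvd_choose_self (by omega) (by omega)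
          have hzz : ((p.choose (i+1) : ℕ) : ZMod p) = 0 := by
            rw [ZMod.natCast_eq_zero_iff]
            exact_mod_cast hdvd
          rw [hzz]; ring
        rw [Finset.sum_congr rfl hz]
        simp
      rw [hmid, Nat.choose_self, Nat.sub_self, ZMod.pow_card]
      have hnp : (bell (n + p) : ZMod p) = bell (n+1) + bell n := bell_add_prime hp n
      rw [hnp]
      push_cast
      ring

lemma bell_pow_prime_card {p : ℕ} (hp : p.Prime) (m : ℕ) :
    (bell (p^m) : ZMod p) = ((m + 1 : ℕ) : ZMod p) := by
  have h := bell_pow_prime hp m 0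
  rw [Nat.zero_add] at h
  have hb0 : bell 0 = 1 := rfl
  have hb1 : bell 1 = 1 := rfl
  rw [h, hb0, hb1]
  push_cast
  ring

section GenGroup

variable {G : Type*} [AddCommGroup G]

/-- The coset partition associated to a "subgroup-like" subset. -/
def cosets (H : Set G) : Set (Set G) := {S | ∃ x : G, S = {z | z - x ∈ H}}

lemma mem_coset_self (H : Set G) (h0 : (0:G) ∈ H) (x : G) : x ∈ {z : G | z - x ∈ H} := by
  simp [h0]

lemma coset_eq (H : Set G) (h0 : (0:G) ∈ H)
    (hsub : ∀ a b : G, a ∈ H → b ∈ H → a - b ∈ H) {x a : G} (ha : a - x ∈ H) :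
    {z : G | z - x ∈ H} = {z : G | z - a ∈ H} := by
  have hneg : ∀ u : G, u ∈ H → -u ∈ H := fun u hu => by
    have := hsub 0 u h0 hu; simpa using this
  have hadd : ∀ u v : G, u ∈ H → v ∈ H → u + v ∈ H := fun u v hu hv => by
    have := hsub u (-v) hu (hneg v hv); simpa [sub_neg_eq_add] using this
  ext z
  simp only [Set.mem_setOf_eq]
  constructor
  · intro hz
    have := hsub _ _ hz ha
    simpa [sub_sub_sub_cancel_right] using this
  · intro hz
    have := hadd _ _ hz ha
    simpa [sub_add_sub_cancel] using this

lemma isPartition_cosets (H : Set G) (h0 : (0:G) ∈ H)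
    (hsub : ∀ a b : G, a ∈ H → b ∈ H → a - b ∈ H) :
    Setoid.IsPartition (cosets H) := by
  constructor
  · rintro ⟨x, hx⟩
    have h := mem_coset_self H h0 x
    rw [← hx] at h
    exact h
  · intro a
    refine ⟨{z | z - a ∈ H}, ⟨⟨a, rfl⟩, mem_coset_self H h0 a⟩, ?_⟩
    rintro S ⟨⟨x, rfl⟩, haS⟩
    exact coset_eq H h0 hsub haS

lemma cosets_invariant (H : Set G) (y : G) (A : Set G) (hA : A ∈ cosets H) :
    (fun x => x + y) '' A ∈ cosets H := by
  obtain ⟨x, rfl⟩ := hA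
  refine ⟨x + y, ?_⟩
  ext w
  simp only [Set.mem_image, Set.mem_setOf_eq]
  constructor
  · rintro ⟨z, hz, rfl⟩
    have : z + y - (x + y) = z - x := by abel
    rw [this]
    exact hz
  · intro hw
    refine ⟨w - y, ?_, by abel⟩
    have : w - y - x = w - (x + y) := by abel
    rw [this]
    exact hw

lemma invariant_eq_cosets {P : Set (Set G)} (hP : Setoid.IsPartition P)
    (hinv : ∀ y : G, ∀ A ∈ P, (fun x => x + y) '' A ∈ P) :
    ∃ B : Set G, (0:G) ∈ B ∧ (∀ a b : G, a ∈ B → b ∈ B → a - b ∈ B) ∧ P = cosets B := by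
  obtain ⟨B, ⟨hBP, hB0⟩, huniq⟩ := hP.2 0
  have hblocks : ∀ A ∈ P, ∀ A' ∈ P, ∀ z : G, z ∈ A → z ∈ A' → A = A' := by
    intro A hA A' hA' z hzA hzA'
    obtain ⟨C, _, hCu⟩ := hP.2 z
    rw [hCu A ⟨hA, hzA⟩, hCu A' ⟨hA', hzA'⟩]
  have htrans : ∀ (y : G) (A : Set G), A ∈ P → y ∈ A → A = (fun x => x + y) '' B := by
    intro y A hA hy
    exact hblocks A hA _ (hinv y B hBP) y hy ⟨0, hB0, by simp⟩
  have himg : ∀ y : G, (fun x => x + y) '' B = {z | z - y ∈ B} := by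
    intro y
    ext w
    simp only [Set.mem_image, Set.mem_setOf_eq]
    constructor
    · rintro ⟨u, hu, rfl⟩; simpa using hu
    · intro hw; exact ⟨w - y, hw, by abel⟩
  have hsub : ∀ a b : G, a ∈ B → b ∈ B → a - b ∈ B := by
    intro a b ha hb
    have hBb := htrans b B hBP hb
    rw [hBb] at ha
    obtain ⟨u, hu, rfl⟩ := ha
    simpa using hu
  refine ⟨B, hB0, hsub, ?_⟩
  ext A
  constructor
  · intro hA
    obtain ⟨a, ha⟩ := Set.nonempty_iff_ne_empty.mpr (fun h => hP.1 (h ▸ hA))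
    exact ⟨a, by rw [htrans a A hA ha, himg a]⟩
  · rintro ⟨x, rfl⟩
    rw [← himg x]
    exact hinv x B hBP

end GenGroup

section ZModPart

/-- The set of multiples of `c`. -/
def mulSet {N : ℕ} (c : ZMod N) : Set (ZMod N) := {z : ZMod N | ∃ a : ZMod N, z = a * c}

lemma mulSet_zero_mem {N : ℕ} (c : ZMod N) : (0 : ZMod N) ∈ mulSet c := ⟨0, by ring⟩

lemma mulSet_sub {N : ℕ} (c : ZMod N) :
    ∀ a b : ZMod N, a ∈ mulSet c → b ∈ mulSet c → a - b ∈ mulSet c := by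
  rintro a b ⟨u, rfl⟩ ⟨v, rfl⟩
  exact ⟨u - v, by ring⟩

lemma subgroup_set_eq_mulSet {N : ℕ} [NeZero N] (B : Set (ZMod N))
    (h0 : (0 : ZMod N) ∈ B) (hsub : ∀ a b : ZMod N, a ∈ B → b ∈ B → a - b ∈ B) :
    ∃ d : ℕ, d ∣ N ∧ B = mulSet ((d : ZMod N)) := by
  have hneg : ∀ u : ZMod N, u ∈ B → -u ∈ B := fun u hu => by
    have := hsub 0 u h0 hu; simpa using this
  have hadd : ∀ u v : ZMod N, u ∈ B → v ∈ B → u + v ∈ B := fun u v hu hv => by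
    have := hsub u (-v) hu (hneg v hv); simpa [sub_neg_eq_add] using this
  let H : AddSubgroup (ZMod N) :=
    { carrier := B
      zero_mem' := h0
      add_mem' := fun {u v} hu hv => hadd u v hu hv
      neg_mem' := fun {u} hu => hneg u hu }
  obtain ⟨g, hg⟩ := IsAddCyclic.exists_generator (α := H)
  set x : ZMod N := (g : ZMod N) with hx
  -- B = set of multiples of x
  have hBx : B = mulSet x := by
    ext z
    constructor
    · intro hz
      obtain ⟨n, hn⟩ := hg ⟨z, hz⟩
      have : (n • (g : ZMod N) : ZMod N) = z := by
        have := congrArg (Subtype.val) hn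
        simpa using this
      exact ⟨(n : ZMod N), by rw [← this, zsmul_eq_mul]⟩
    · rintro ⟨a, rfl⟩
      have hxB : x ∈ B := g.2
      have : a * x = a.val • x := by
        rw [nsmul_eq_mul, ZMod.natCast_zmod_val]
      rw [this]
      exact AddSubgroup.nsmul_mem H hxB a.val
  -- multiples of x = multiples of gcd(x.val, N)
  set d : ℕ := Nat.gcd x.val N with hd
  refine ⟨d, Nat.gcd_dvd_right _ _, ?_⟩
  rw [hBx]
  have hx_mul : ∃ c1 : ZMod N, x = c1 * (d : ZMod N) := by
    obtain ⟨t, ht⟩ := Nat.gcd_dvd_left x.val N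
    refine ⟨(t : ZMod N), ?_⟩
    have : ((x.val : ℕ) : ZMod N) = ((d * t : ℕ) : ZMod N) := by rw [← ht]
    rw [ZMod.natCast_zmod_val] at this
    rw [this]
    push_cast
    ring
  have hd_mul : ∃ c2 : ZMod N, (d : ZMod N) = c2 * x := by
    have hbez : ((d : ℕ) : ℤ) = (x.val : ℤ) * Nat.gcdA x.val N + (N : ℤ) * Nat.gcdB x.val N :=
      Nat.gcd_eq_gcd_ab x.val N
    refine ⟨((Nat.gcdA x.val N : ℤ) : ZMod N), ?_⟩
    have := congrArg (fun t : ℤ => ((t : ℤ) : ZMod N)) hbez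
    push_cast at this
    rw [ZMod.natCast_zmod_val, ZMod.natCast_self] at this
    rw [this]
    ring
  obtain ⟨c1, hc1⟩ := hx_mul
  obtain ⟨c2, hc2⟩ := hd_mul
  ext z
  constructor
  · rintro ⟨a, rfl⟩
    exact ⟨a * c1, by rw [hc1]; ring⟩
  · rintro ⟨a, rfl⟩
    exact ⟨a * c2, by rw [hc2]; ring⟩

end ZModPart

section Count

lemma cosets_injective {G : Type*} [AddCommGroup G] {H1 H2 : Set G}
    (h01 : (0:G) ∈ H1) (hsub1 : ∀ a b : G, a ∈ H1 → b ∈ H1 → a - b ∈ H1)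
    (h02 : (0:G) ∈ H2) (hsub2 : ∀ a b : G, a ∈ H2 → b ∈ H2 → a - b ∈ H2)
    (h : cosets H1 = cosets H2) : H1 = H2 := by
  have hmem : ∀ (H : Set G), (0:G) ∈ H → H ∈ cosets H := by
    intro H h0
    refine ⟨0, ?_⟩
    ext z
    simp
  have key : ∀ (H K : Set G), (0:G) ∈ K → (∀ a b : G, a ∈ K → b ∈ K → a - b ∈ K) →
      H ∈ cosets K → (0:G) ∈ H → H = K := by
    rintro H K h0K hsubK ⟨x, rfl⟩ h0H
    have hx : (0:G) - x ∈ K := h0H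
    have := coset_eq K h0K hsubK (a := 0) hx
    rw [this]
    ext z
    simp
  have h1 : H1 ∈ cosets H2 := h ▸ hmem H1 h01
  exact key H1 H2 h02 hsub2 h1 h01

lemma mulSet_pow_ne {p m : ℕ} (hp : p.Prime) {k l : ℕ} (hk : k < l) (hl : l ≤ m) :
    mulSet ((p : ZMod (p^m))^k) ≠ mulSet ((p : ZMod (p^m))^l) := by
  haveI : NeZero (p^m) := ⟨(Nat.pow_pos (n := m) hp.pos).ne'⟩
  intro heq
  have hmem : (p : ZMod (p^m))^k ∈ mulSet ((p : ZMod (p^m))^k) := ⟨1, by ring⟩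
  rw [heq] at hmem
  obtain ⟨a, ha⟩ := hmem
  have hcast : (((p^k : ℕ)) : ZMod (p^m)) = ((a.val * p^l : ℕ) : ZMod (p^m)) := by
    push_cast
    rw [ZMod.natCast_zmod_val]
    exact ha
  have hmod : (p^k : ℕ) ≡ a.val * p^l [MOD p^m] := (ZMod.natCast_eq_natCast_iff _ _ _).mp hcast
  have hdvd1 : ((p^m : ℕ) : ℤ) ∣ ((a.val * p^l : ℕ) : ℤ) - ((p^k : ℕ) : ℤ) := hmod.dvd
  have hdvd2 : ((p^(k+1) : ℕ) : ℤ) ∣ ((p^m : ℕ) : ℤ) := by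
    exact_mod_cast Int.natCast_dvd_natCast.mpr (pow_dvd_pow p (by omega))
  have hdvd3 : ((p^(k+1) : ℕ) : ℤ) ∣ ((a.val * p^l : ℕ) : ℤ) := by
    exact_mod_cast Int.natCast_dvd_natCast.mpr (Dvd.dvd.mul_left (pow_dvd_pow p (by omega)) a.val)
  have hdvd4 : ((p^(k+1) : ℕ) : ℤ) ∣ ((p^k : ℕ) : ℤ) := by
    have := dvd_sub hdvd3 (hdvd2.trans hdvd1)
    simpa using this
  have hdvd5 : (p^(k+1) : ℕ) ∣ (p^k : ℕ) := Int.natCast_dvd_natCast.mp hdvd4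
  have hle : (p^(k+1) : ℕ) ≤ p^k := Nat.le_of_dvd (Nat.pow_pos (n := k) hp.pos) hdvd5
  have hlt : (p^k : ℕ) < p^(k+1) := Nat.pow_lt_pow_right hp.one_lt (by omega)
  omega

theorem card_fixed_partitions (p m : ℕ) (hp : p.Prime) (hm : 0 < m) :
    {P : Set (Set (ZMod (p ^ m))) | Setoid.IsPartition P ∧
        ∀ y : ZMod (p ^ m), ∀ A ∈ P, (fun x => x + y) '' A ∈ P}.ncard = m + 1 := by
  haveI : NeZero (p^m) := ⟨(Nat.pow_pos (n := m) hp.pos).ne'⟩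
  set f : ℕ → Set (Set (ZMod (p^m))) := fun k => cosets (mulSet ((p : ZMod (p^m))^k)) with hf
  have hset_eq : {P : Set (Set (ZMod (p ^ m))) | Setoid.IsPartition P ∧
        ∀ y : ZMod (p ^ m), ∀ A ∈ P, (fun x => x + y) '' A ∈ P} = f '' (Set.Iic m) := by
    ext P
    constructor
    · rintro ⟨hP, hinv⟩
      obtain ⟨B, h0, hsub, rfl⟩ := invariant_eq_cosets hP hinv
      obtain ⟨d, hdvd, hBd⟩ := subgroup_set_eq_mulSet B h0 hsub
      obtain ⟨k, hk, rfl⟩ := (Nat.dvd_prime_pow hp).mp hdvd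
      refine ⟨k, hk, ?_⟩
      rw [hf]
      congr 1
      rw [hBd]
      congr 1
      push_cast
      rfl
    · rintro ⟨k, _, rfl⟩
      exact ⟨isPartition_cosets _ (mulSet_zero_mem _) (mulSet_sub _),
        fun y A hA => cosets_invariant _ y A hA⟩
  rw [hset_eq]
  have hinj : Set.InjOn f (Set.Iic m) := by
    intro k hk l hl hkl
    by_contra hne
    rcases Nat.lt_or_ge k l with h | h
    · exact mulSet_pow_ne hp h hl (cosets_injective (mulSet_zero_mem _) (mulSet_sub _)
        (mulSet_zero_mem _) (mulSet_sub _) hkl)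
    · have h' : l < k := by omega
      exact mulSet_pow_ne hp h' hk (cosets_injective (mulSet_zero_mem _) (mulSet_sub _)
        (mulSet_zero_mem _) (mulSet_sub _) hkl.symm)
  rw [Set.ncard_image_of_injOn hinj]
  rw [← Finset.coe_Iic, Set.ncard_coe_finset, Nat.card_Iic]

end Count


theorem card_fixed_partitions_mod (p m : ℕ) (hp : p.Prime) (hm : 0 < m) :
    {P : Set (Set (ZMod (p ^ m))) | Setoid.IsPartition P ∧
        ∀ y : ZMod (p ^ m), ∀ A ∈ P, (fun x => x + y) '' A ∈ P}.ncard ≡ bell (p ^ m) [MOD p] := by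
  rw [card_fixed_partitions p m hp hm]
  have h1 : ((m + 1 : ℕ) : ZMod p) = (bell (p^m) : ZMod p) := (bell_pow_prime_card hp m).symm
  exact (ZMod.natCast_eq_natCast_iff _ _ _).mp h1
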